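/- If a connected graph G contains three distinct vertices with the same open neighbourhood, then G has no multiset resolving set. -/
import Mathlib

open SimpleGraph Finset

/-- The representation multiset of `u` with respect to `W`: the multiset of distances
from `u` to the vertices of `W`. -/
noncomputable def mrep {V : Type*} (G : SimpleGraph V) (u : V) (W : Finset V) : Multiset ℕ :=
  W.val.map fun w => G.dist u w

/-- `W` is a multiset resolving set: all distinct vertices have distinct representation multisets. -/
def IsMultisetResolving {V : Type*} (G : SimpleGraph V) (W : Finset V) : Prop :=
  ∀ u v : V, u ≠ v → mrep G u W ≠ mrep G v W

lemma dist_le_of_nbhd {V : Type*} (G : SimpleGraph V) (hconn : G.Connected) {u v x : V}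
    (h : G.neighborSet v ⊆ G.neighborSet u) (hx : x ≠ v) : G.dist u x ≤ G.dist v x := by
  obtain ⟨p, hp⟩ := hconn.exists_walk_length_eq_dist v x
  cases p with
  | nil => exact absurd rfl hx
  | cons hadj q =>
    have hadj' : G.Adj u _ := h hadj
    calc G.dist u x ≤ (SimpleGraph.Walk.cons hadj' q).length := G.dist_le _
      _ = G.dist v x := by simpa using hp

lemma dist_eq_of_nbhd {V : Type*} (G : SimpleGraph V) (hconn : G.Connected) {u v x : V}
    (h : G.neighborSet u = G.neighborSet v) (hxu : x ≠ u) (hxv : x ≠ v) :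
    G.dist u x = G.dist v x :=
  le_antisymm (dist_le_of_nbhd G hconn h.ge hxv) (dist_le_of_nbhd G hconn h.le hxu)

lemma mrep_eq_of_nbhd {V : Type*} (G : SimpleGraph V) (hconn : G.Connected) {u v : V}
    (huv : u ≠ v) (h : G.neighborSet u = G.neighborSet v) (W : Finset V)
    (hmem : (u ∈ W) ↔ (v ∈ W)) : mrep G u W = mrep G v W := by
  classical
  by_cases hu : u ∈ W
  · have hv : v ∈ W := hmem.mp hu
    have hvW : v ∈ Multiset.erase W.val u := Multiset.mem_erase_of_ne huv.symm |>.mpr hv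
    have hrec : W.val = u ::ₘ v ::ₘ ((W.val.erase u).erase v) := by
      rw [Multiset.cons_erase hvW, Multiset.cons_erase hu]
    have hrest : ∀ x ∈ (W.val.erase u).erase v, G.dist u x = G.dist v x := by
      intro x hx
      have hnd : (W.val.erase u).Nodup := W.nodup.erase u
      have hxv : x ≠ v := (hnd.mem_erase_iff.mp hx).1
      have hxu : x ≠ u := (W.nodup.mem_erase_iff.mp (Multiset.mem_of_mem_erase hx)).1
      exact dist_eq_of_nbhd G hconn h hxu hxv
    unfold mrep
    rw [hrec]
    simp only [Multiset.map_cons]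
    rw [Multiset.cons_swap]
    congr 1
    · exact SimpleGraph.dist_comm
    congr 1
    · rw [SimpleGraph.dist_self, SimpleGraph.dist_self]
    exact Multiset.map_congr rfl (fun x hx => hrest x hx)
  · have hv : v ∉ W := fun hv => hu (hmem.mpr hv)
    refine Multiset.map_congr rfl ?_
    intro x hx
    have hxu : x ≠ u := fun e => hu (e ▸ hx)
    have hxv : x ≠ v := fun e => hv (e ▸ hx)
    exact dist_eq_of_nbhd G hconn h hxu hxv

/-- If a connected graph contains three distinct vertices with the same open
neighbourhood, then it has no multiset resolving set. -/
theorem stmt_1 {V : Type*} [Fintype V] (G : SimpleGraph V)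
    (hconn : G.Connected) (u v w : V) (huv : u ≠ v) (huw : u ≠ w) (hvw : v ≠ w)
    (h1 : G.neighborSet u = G.neighborSet v) (h2 : G.neighborSet v = G.neighborSet w) :
    ∀ W : Finset V, ¬ IsMultisetResolving G W := by
  intro W hW
  by_cases hu : u ∈ W <;> by_cases hv : v ∈ W <;> by_cases hw : w ∈ W
  · exact hW u v huv (mrep_eq_of_nbhd G hconn huv h1 W (by tauto))
  · exact hW u v huv (mrep_eq_of_nbhd G hconn huv h1 W (by tauto))
  · exact hW u w huw (mrep_eq_of_nbhd G hconn huw (h1.trans h2) W (by tauto))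
  · exact hW v w hvw (mrep_eq_of_nbhd G hconn hvw h2 W (by tauto))
  · exact hW v w hvw (mrep_eq_of_nbhd G hconn hvw h2 W (by tauto))
  · exact hW u w huw (mrep_eq_of_nbhd G hconn huw (h1.trans h2) W (by tauto))
  · exact hW u v huv (mrep_eq_of_nbhd G hconn huv h1 W (by tauto))
  · exact hW u v huv (mrep_eq_of_nbhd G hconn huv h1 W (by tauto))
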